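/- arXiv:1207.6295 — 3 statements merged into one kernel-verified Lean document; each statement's English description precedes it below -/
import Mathlib

section
/- Fix λ > 0. Define K(D̄, ε̄) = -log(ε̄)/(λD̄) and C(D̄, ε̄) = λ·K(D̄,ε̄)/log(1 + K(D̄,ε̄)) for D̄ > 0 and ε̄ ∈ (0,1). Then C is nonincreasing in D̄ (for fixed ε̄) and nonincreasing in ε̄ (for fixed D̄). -/
lemma div_log_one_add_mono {a b : ℝ} (ha : 0 < a) (hab : a ≤ b) :
    a / Real.log (1 + a) ≤ b / Real.log (1 + b) := by
  have h1a : (0:ℝ) < 1 + a := by linarith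
  have h1b : (0:ℝ) < 1 + b := by linarith
  have hla : 0 < Real.log (1 + a) := Real.log_pos (by linarith)
  have hlb : 0 < Real.log (1 + b) := Real.log_pos (by linarith)
  rw [div_le_div_iff₀ hla hlb]
  have h2 : Real.log (1 + b) - Real.log (1 + a) ≤ (b - a) / (1 + a) := by
    have h := Real.log_le_sub_one_of_pos (div_pos h1b h1a)
    rw [Real.log_div h1b.ne' h1a.ne'] at h
    have heq : (1 + b) / (1 + a) - 1 = (b - a) / (1 + a) := by field_simp; ring
    linarith [heq ▸ h]
  have h3 : a / (1 + a) ≤ Real.log (1 + a) := by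
    have h := Real.log_le_sub_one_of_pos (show (0:ℝ) < (1 + a)⁻¹ from inv_pos.mpr h1a)
    rw [Real.log_inv] at h
    have heq : (1 + a)⁻¹ - 1 = -(a / (1 + a)) := by field_simp; ring
    linarith [heq ▸ h]
  have P1 : a * (Real.log (1 + b) - Real.log (1 + a)) ≤ a * ((b - a) / (1 + a)) :=
    mul_le_mul_of_nonneg_left h2 ha.le
  have P2 : (b - a) * (a / (1 + a)) ≤ (b - a) * Real.log (1 + a) :=
    mul_le_mul_of_nonneg_left h3 (by linarith)
  have he : a * ((b - a) / (1 + a)) = (b - a) * (a / (1 + a)) := by ring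
  nlinarith [P1, P2, he]

/-- The Poisson capacity constraint `C(D̄,ε̄) = λK/log(1+K)`, with
`K = -log ε̄/(λD̄)`, is nonincreasing in `D̄` and nonincreasing in `ε̄`. -/
theorem poisson_capacity_antitone (lam : ℝ) (hlam : 0 < lam) :
    let C : ℝ → ℝ → ℝ := fun D eps =>
      lam * (-Real.log eps / (lam * D)) / Real.log (1 + -Real.log eps / (lam * D))
    (∀ eps ∈ Set.Ioo (0 : ℝ) 1, ∀ D₁ D₂ : ℝ, 0 < D₁ → D₁ ≤ D₂ →
        C D₂ eps ≤ C D₁ eps) ∧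
    (∀ D : ℝ, 0 < D → ∀ eps₁ eps₂ : ℝ, eps₁ ∈ Set.Ioo (0 : ℝ) 1 →
        eps₂ ∈ Set.Ioo (0 : ℝ) 1 → eps₁ ≤ eps₂ → C D eps₂ ≤ C D eps₁) := by
  intro C
  have key : ∀ k₁ k₂ : ℝ, 0 < k₁ → k₁ ≤ k₂ →
      lam * k₁ / Real.log (1 + k₁) ≤ lam * k₂ / Real.log (1 + k₂) := by
    intro k₁ k₂ h1 h12
    rw [mul_div_assoc, mul_div_assoc]
    exact mul_le_mul_of_nonneg_left (div_log_one_add_mono h1 h12) hlam.le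
  constructor
  · intro eps heps D₁ D₂ hD₁ hD
    have hlog : 0 < -Real.log eps := by
      have := Real.log_neg heps.1 heps.2; linarith
    have hK2 : 0 < -Real.log eps / (lam * D₂) :=
      div_pos hlog (mul_pos hlam (lt_of_lt_of_le hD₁ hD))
    have hK : -Real.log eps / (lam * D₂) ≤ -Real.log eps / (lam * D₁) := by
      gcongr
    exact key _ _ hK2 hK
  · intro D hD eps₁ eps₂ h1 h2 he
    have hl2 : 0 < -Real.log eps₂ := by
      have := Real.log_neg h2.1 h2.2; linarith
    have hle : -Real.log eps₂ / (lam * D) ≤ -Real.log eps₁ / (lam * D) := by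
      gcongr
      exact h1.1
    exact key _ _ (div_pos hl2 (mul_pos hlam hD)) hle
end

section
/- Fix λ > 0, α ∈ (1,2). Let C(D̄, ε̄) > λ be the implicit solution of inf_{1 < γ < C/λ} [γ/(C^{α-1}(C-γλ)) · γ^{(α-1)/α}/log(γ^{(α-1)/α})] = ε̄ D̄^{α-1}. Then as ε̄ D̄^{α-1} → 0, C(D̄, ε̄) = Θ((ε̄ D̄^{α-1})^{-1/α}); i.e., there exist constants 0 < c₁ ≤ c₂ and δ > 0 such that whenever ε̄ D̄^{α-1} ≤ δ, c₁ (ε̄ D̄^{α-1})^{-1/α} ≤ C(D̄, ε̄) ≤ c₂ (ε̄ D̄^{α-1})^{-1/α}. -/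
/-- Scaling law for the heavy-tailed capacity: if `C(D̄,ε̄)` solves the implicit
equation, then `C(D̄,ε̄) = Θ((ε̄D̄^{α-1})^{-1/α})` as `ε̄D̄^{α-1} → 0`. -/
theorem heavy_tailed_capacity_scaling (lam α : ℝ) (hlam : 0 < lam)
    (hα : α ∈ Set.Ioo (1 : ℝ) 2) :
    ∃ c₁ c₂ δ : ℝ, 0 < c₁ ∧ c₁ ≤ c₂ ∧ 0 < δ ∧
      ∀ D eps C : ℝ, 0 < D → 0 < eps → lam < C →
        (sInf {v : ℝ | ∃ γ : ℝ, 1 < γ ∧ γ < C / lam ∧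
            v = γ / (C ^ (α - 1) * (C - γ * lam)) *
                (γ ^ ((α - 1) / α) / Real.log (γ ^ ((α - 1) / α)))}
          = eps * D ^ (α - 1)) →
        eps * D ^ (α - 1) ≤ δ →
        c₁ * (eps * D ^ (α - 1)) ^ (-(1 / α)) ≤ C ∧
          C ≤ c₂ * (eps * D ^ (α - 1)) ^ (-(1 / α)) := by
  obtain ⟨hα1, hα2⟩ := hα
  have hα0 : (0:ℝ) < α := by linarith
  have hαm : (0:ℝ) < α - 1 := by linarith
  have hβ : (0:ℝ) < (α - 1) / α := div_pos hαm hα0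
  set γ₀ : ℝ := Real.exp (α / (α - 1)) with hγ₀def
  have hγ₀1 : 1 < γ₀ := by
    have h0 : (0:ℝ) < α / (α - 1) := div_pos hα0 hαm
    calc (1:ℝ) = Real.exp 0 := by simp
      _ < γ₀ := Real.exp_lt_exp.mpr h0
  have he1 : (1:ℝ) ≤ Real.exp 1 := Real.one_le_exp zero_le_one
  set K : ℝ := 2 * γ₀ * Real.exp 1 with hKdef
  have hK1 : (1:ℝ) ≤ K := by nlinarith
  set M : ℝ := max 1 (2 * γ₀ * lam) with hMdef
  have hM1 : (1:ℝ) ≤ M := le_max_left _ _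
  have hM0 : (0:ℝ) < M := lt_of_lt_of_le one_pos hM1
  refine ⟨1, K ^ (1/α), M ^ (-α), one_pos, ?_, ?_, ?_⟩
  · calc (1:ℝ) = 1 ^ (1/α) := (Real.one_rpow _).symm
      _ ≤ K ^ (1/α) := Real.rpow_le_rpow zero_le_one hK1 (by positivity)
  · positivity
  intro D eps C hD heps hC heq hsδ
  set s : ℝ := eps * D ^ (α - 1) with hsdef
  have hs : 0 < s := by
    have : (0:ℝ) < D ^ (α - 1) := Real.rpow_pos_of_pos hD _
    positivity
  have hC0 : 0 < C := lt_trans hlam hC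
  have hCα : 0 < C ^ α := Real.rpow_pos_of_pos hC0 _
  have hpow : C ^ (α - 1) * C = C ^ α := by
    rw [← Real.rpow_add_one hC0.ne' (α - 1)]; norm_num
  have hCα1 : 0 < C ^ (α - 1) := Real.rpow_pos_of_pos hC0 _
  set S : Set ℝ := {v : ℝ | ∃ γ : ℝ, 1 < γ ∧ γ < C / lam ∧
      v = γ / (C ^ (α - 1) * (C - γ * lam)) *
          (γ ^ ((α - 1) / α) / Real.log (γ ^ ((α - 1) / α)))} with hSdef
  -- every element of S is at least 1/C^α
  have hlow : ∀ v ∈ S, 1 / C ^ α ≤ v := by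
    rintro v ⟨γ, hγ1, hγ2, rfl⟩
    have hγ0 : 0 < γ := lt_trans one_pos hγ1
    have hgl : γ * lam < C := (lt_div_iff₀ hlam).mp hγ2
    have hCg : 0 < C - γ * lam := by linarith
    have hCgC : C - γ * lam < C := by nlinarith
    set t : ℝ := γ ^ ((α - 1) / α) with htdef
    have ht1 : 1 < t := by
      rw [htdef]
      exact (Real.one_lt_rpow_iff_of_pos hγ0).mpr (Or.inl ⟨hγ1, hβ⟩)
    have ht0 : 0 < t := lt_trans one_pos ht1
    have hlogt : 0 < Real.log t := Real.log_pos ht1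
    have hltt : Real.log t < t :=
      lt_of_le_of_lt (Real.log_le_sub_one_of_pos ht0) (by linarith)
    have h1 : 1 ≤ t / Real.log t := by
      rw [le_div_iff₀ hlogt]; linarith
    have hden : 0 < C ^ (α - 1) * (C - γ * lam) := mul_pos hCα1 hCg
    have h2 : 1 / C ^ α ≤ γ / (C ^ (α - 1) * (C - γ * lam)) := by
      rw [div_le_div_iff₀ hCα hden]
      have hle : C ^ (α - 1) * (C - γ * lam) ≤ C ^ (α - 1) * C :=
        mul_le_mul_of_nonneg_left hCgC.le hCα1.le
      rw [hpow] at hle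
      nlinarith
    calc 1 / C ^ α = (1 / C ^ α) * 1 := (mul_one _).symm
      _ ≤ γ / (C ^ (α - 1) * (C - γ * lam)) * (t / Real.log t) :=
        mul_le_mul h2 h1 zero_le_one (by positivity)
  -- S is nonempty
  have hClam : 1 < C / lam := (one_lt_div hlam).mpr hC
  have hSne : S.Nonempty := by
    refine ⟨_, ⟨(1 + C / lam) / 2, by linarith, by linarith, rfl⟩⟩
  have hbdd : BddBelow S := ⟨1 / C ^ α, hlow⟩
  have hsinf : 1 / C ^ α ≤ s := by
    rw [← heq]; exact le_csInf hSne hlow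
  -- lower bound on C
  have hsinv : s⁻¹ ≤ C ^ α := by
    rw [← inv_inv (C ^ α)]
    exact inv_anti₀ (by positivity) (by rwa [one_div] at hsinf)
  have hlowC : s ^ (-(1/α)) ≤ C := by
    have h3 : (s⁻¹) ^ (1/α) ≤ (C ^ α) ^ (1/α) :=
      Real.rpow_le_rpow (by positivity) hsinv (by positivity)
    have h4 : (C ^ α) ^ (1/α) = C := by
      rw [← Real.rpow_mul hC0.le, mul_one_div, div_self hα0.ne', Real.rpow_one]
    have h5 : s ^ (-(1/α)) = (s⁻¹) ^ (1/α) := by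
      rw [Real.rpow_neg hs.le, ← Real.inv_rpow hs.le]
    rw [h5]; rw [h4] at h3; exact h3
  constructor
  · rw [one_mul]; exact hlowC
  -- C is large: M ≤ C
  have hMC : M ≤ C := by
    have hδ : s ≤ (M ^ α)⁻¹ := by
      rwa [Real.rpow_neg hM0.le] at hsδ
    have hMα : 0 < M ^ α := Real.rpow_pos_of_pos hM0 _
    have h6 : M ^ α ≤ C ^ α := by
      have h7 : 1 / C ^ α ≤ 1 / M ^ α := le_trans hsinf (by rw [one_div]; exact hδ)
      rw [div_le_div_iff₀ hCα hMα] at h7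
      nlinarith
    calc M = (M ^ α) ^ (1/α) := by
          rw [← Real.rpow_mul hM0.le, mul_one_div, div_self hα0.ne', Real.rpow_one]
      _ ≤ (C ^ α) ^ (1/α) := Real.rpow_le_rpow hMα.le h6 (by positivity)
      _ = C := by
          rw [← Real.rpow_mul hC0.le, mul_one_div, div_self hα0.ne', Real.rpow_one]
  have h2γ : 2 * γ₀ * lam ≤ C := le_trans (le_max_right _ _) hMC
  have hg0lam : 0 < γ₀ * lam := by positivity
  have hγ₀C : γ₀ < C / lam := by
    rw [lt_div_iff₀ hlam]; linarith [hg0lam, h2γ]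
  -- the witness γ₀
  have hγ₀β : γ₀ ^ ((α - 1) / α) = Real.exp 1 := by
    have hmul : (α / (α - 1)) * ((α - 1) / α) = 1 := by
      field_simp
    rw [hγ₀def, ← Real.exp_one_rpow (α / (α - 1)),
      ← Real.rpow_mul (Real.exp_pos 1).le, hmul, Real.rpow_one]
  have hv₀mem : γ₀ / (C ^ (α - 1) * (C - γ₀ * lam)) *
      (γ₀ ^ ((α - 1) / α) / Real.log (γ₀ ^ ((α - 1) / α))) ∈ S :=
    ⟨γ₀, hγ₀1, hγ₀C, rfl⟩
  have hsv₀ : s ≤ γ₀ / (C ^ (α - 1) * (C - γ₀ * lam)) *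
      (γ₀ ^ ((α - 1) / α) / Real.log (γ₀ ^ ((α - 1) / α))) := by
    rw [← heq]; exact csInf_le hbdd hv₀mem
  rw [hγ₀β, Real.log_exp, div_one] at hsv₀
  -- bound the witness value by K / C^α
  have hCg0 : C / 2 ≤ C - γ₀ * lam := by linarith [hg0lam, h2γ]
  have hCg0' : 0 < C - γ₀ * lam := lt_of_lt_of_le (by positivity) hCg0
  have hdenlb : C ^ α / 2 ≤ C ^ (α - 1) * (C - γ₀ * lam) := by
    have := mul_le_mul_of_nonneg_left hCg0 hCα1.le
    calc C ^ α / 2 = C ^ (α - 1) * (C / 2) := by rw [← hpow]; ring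
      _ ≤ _ := this
  have hv₀le : γ₀ / (C ^ (α - 1) * (C - γ₀ * lam)) * Real.exp 1 ≤ K / C ^ α := by
    have h8 : γ₀ / (C ^ (α - 1) * (C - γ₀ * lam)) ≤ γ₀ / (C ^ α / 2) :=
      div_le_div_of_nonneg_left (by positivity) (by positivity) hdenlb
    have h9 : γ₀ / (C ^ α / 2) * Real.exp 1 = K / C ^ α := by
      rw [hKdef]; field_simp
    calc γ₀ / (C ^ (α - 1) * (C - γ₀ * lam)) * Real.exp 1
        ≤ γ₀ / (C ^ α / 2) * Real.exp 1 :=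
          mul_le_mul_of_nonneg_right h8 (Real.exp_pos 1).le
      _ = K / C ^ α := h9
  have hsK : s ≤ K / C ^ α := le_trans hsv₀ hv₀le
  -- conclude upper bound
  have h10 : s * C ^ α ≤ K := by
    rw [← le_div_iff₀ hCα]; exact hsK
  have h11 : (s * C ^ α) ^ (1/α) ≤ K ^ (1/α) :=
    Real.rpow_le_rpow (by positivity) h10 (by positivity)
  rw [Real.mul_rpow hs.le hCα.le] at h11
  have h12 : (C ^ α) ^ (1/α) = C := by
    rw [← Real.rpow_mul hC0.le, mul_one_div, div_self hα0.ne', Real.rpow_one]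
  rw [h12] at h11
  have hs1α : 0 < s ^ (1/α) := Real.rpow_pos_of_pos hs _
  have h13 : C ≤ K ^ (1/α) / s ^ (1/α) := by
    rw [le_div_iff₀ hs1α]; linarith [h11]
  rw [div_eq_mul_inv, ← Real.rpow_neg hs.le] at h13
  exact h13
end

section
/- For a discrete-time Poisson arrival process with rate λ served at constant rate C with λ(e^θ - 1)/θ ≤ C for some θ > 0, the transient virtual delay satisfies P(D(t) > D̄) ≤ e^{-θ C D̄} for all t ≥ 0, where D(t) = inf{d : A(t-d) ≤ R(t)} and R(t) ≥ inf_{0≤s≤t}(A(s) + C(t-s)). -/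
open MeasureTheory ProbabilityTheory Finset

private lemma sum_Ico_telescope (f : ℕ → ℝ) {s u : ℕ} (h : s ≤ u) :
    ∑ i ∈ Finset.Ico s u, (f (i + 1) - f i) = f u - f s := by
  induction u, h using Nat.le_induction with
  | base => simp
  | succ u hu ih =>
    rw [Finset.sum_Ico_succ_top (by omega), ih]
    ring

private lemma ville_ineq {Ω : Type*} {mΩ : MeasurableSpace Ω} (P : Measure Ω)
    [IsProbabilityMeasure P]
    (Y : ℕ → Ω → ℝ) (hYmeas : ∀ i, Measurable (Y i))
    (hYnn : ∀ i ω, 0 ≤ Y i ω)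
    (hYint : ∀ i, Integrable (Y i) P)
    (hY1 : ∀ i, ∫ ω, Y i ω ∂P ≤ 1)
    (hind : iIndepFun Y P)
    (u : ℕ) (a : ℝ) (ha : 1 ≤ a) :
    P {ω | ∃ s, s ≤ u ∧ a < ∏ i ∈ Finset.Ico s u, Y i ω} ≤ ENNReal.ofReal (1 / a) := by
  classical
  set M : ℕ → Ω → ℝ := fun s ω => ∏ i ∈ Finset.Ico s u, Y i ω with hM
  have hMmeas : ∀ s, Measurable (M s) := by
    intro s
    exact Finset.measurable_prod _ (fun i _ => hYmeas i)
  have hMnn : ∀ s ω, 0 ≤ M s ω := fun s ω => Finset.prod_nonneg fun i _ => hYnn i ω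
  -- integrability of finite products of the Y's
  have hProdInt : ∀ S : Finset ℕ, Integrable (fun ω => ∏ i ∈ S, Y i ω) P := by
    intro S
    induction S using Finset.induction with
    | empty => simpa using (integrable_const (1 : ℝ) (μ := P))
    | @insert i S hi ih =>
      have hIF : IndepFun (∏ j ∈ S, Y j) (Y i) P :=
        hind.indepFun_finsetProd_of_notMem hYmeas hi
      have : Integrable ((∏ j ∈ S, Y j) * Y i) P := by
        refine hIF.integrable_mul ?_ (hYint i)
        have : (∏ j ∈ S, Y j) = fun ω => ∏ j ∈ S, Y j ω := by
          funext ω; simp [Finset.prod_apply]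
        rwa [this]
      have heq : (fun ω => ∏ j ∈ insert i S, Y j ω)
          = fun ω => (∏ j ∈ S, Y j) ω * Y i ω := by
        funext ω
        simp [Finset.prod_insert hi, Finset.prod_apply, mul_comm]
      rw [heq]
      exact this
  have hMint : ∀ s, Integrable (M s) P := fun s => hProdInt _
  set F : ℕ → Set Ω := fun s => {ω | ∃ s', s ≤ s' ∧ s' ≤ u ∧ a < M s' ω} with hF
  have hFmeas : ∀ s, MeasurableSet (F s) := by
    intro s
    have : F s = ⋃ s', ⋃ (_ : s ≤ s' ∧ s' ≤ u), {ω | a < M s' ω} := by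
      ext ω; simp [hF]; tauto
    rw [this]
    exact MeasurableSet.iUnion fun s' => MeasurableSet.iUnion fun _ =>
      measurableSet_lt measurable_const (hMmeas s')
  -- the key independence property
  have hindkey : ∀ s, IndepFun (Y s) (((F (s + 1))ᶜ).indicator (M (s + 1))) P := by
    intro s
    set T : Finset ℕ := Finset.Ico (s + 1) u with hTdef
    set p : ℕ → ((i : T) → ℝ) → ℝ :=
      fun s' g => ∏ i ∈ T.attach, if s' ≤ (i : ℕ) then g i else 1 with hp
    have hpmeas : ∀ s', Measurable (p s') := by
      intro s'
      apply Finset.measurable_prod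
      intro i _
      by_cases h : s' ≤ (i : ℕ)
      · simpa [h] using measurable_pi_apply i
      · simpa [h] using measurable_const
    have hpval : ∀ (s' : ℕ) (ω : Ω), s + 1 ≤ s' →
        p s' (fun i : T => Y i ω) = M s' ω := by
      intro s' ω hs'
      show (∏ i ∈ T.attach, if s' ≤ (i : ℕ) then Y (i : ℕ) ω else 1) = M s' ω
      rw [Finset.prod_attach T (fun i => if s' ≤ i then Y i ω else 1),
        ← Finset.prod_filter]
      have h2 : T.filter (fun i => s' ≤ i) = Finset.Ico s' u := by
        ext i
        simp only [hTdef, Finset.mem_filter, Finset.mem_Ico]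
        omega
      rw [h2]
    set G : Set ((i : T) → ℝ) := ⋂ s' ∈ Set.Icc (s + 1) u, {g | p s' g ≤ a} with hG
    have hGmeas : MeasurableSet G :=
      MeasurableSet.biInter (Set.to_countable _)
        fun s' _ => measurableSet_le (hpmeas s') measurable_const
    set φ : ((i : T) → ℝ) → ℝ := G.indicator (p (s + 1)) with hφ
    have hφmeas : Measurable φ := (hpmeas (s + 1)).indicator hGmeas
    have hmem : ∀ ω, (fun i : T => Y i ω) ∈ G ↔ ω ∈ (F (s + 1))ᶜ := by
      intro ω
      simp only [hG, Set.mem_iInter, Set.mem_setOf_eq, Set.mem_compl_iff, hF,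
        Set.mem_Icc]
      constructor
      · rintro h ⟨s', h1, h2, h3⟩
        exact absurd h3 (not_lt.mpr (by rw [← hpval s' ω h1]; exact h s' ⟨h1, h2⟩))
      · intro h s' hs'
        rw [hpval s' ω hs'.1]
        by_contra hlt
        exact h ⟨s', hs'.1, hs'.2, not_le.mp hlt⟩
    have heq : (fun ω => φ (fun i : T => Y i ω))
        = ((F (s + 1))ᶜ).indicator (M (s + 1)) := by
      funext ω
      by_cases hω : ω ∈ (F (s + 1))ᶜ
      · rw [Set.indicator_of_mem hω, hφ,
          Set.indicator_of_mem ((hmem ω).mpr hω), hpval (s + 1) ω le_rfl]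
      · rw [Set.indicator_of_notMem hω, hφ,
          Set.indicator_of_notMem (fun hc => hω ((hmem ω).mp hc))]
    have hdisj : Disjoint ({s} : Finset ℕ) T := by
      simp only [hTdef, Finset.disjoint_left, Finset.mem_singleton, Finset.mem_Ico]
      omega
    have hbase := hind.indepFun_finset {s} T hdisj hYmeas
    have := hbase.comp
      (show Measurable (fun g : ((i : ({s} : Finset ℕ)) → ℝ) =>
        g ⟨s, Finset.mem_singleton_self s⟩) from measurable_pi_apply _) hφmeas
    rw [show ((fun g : ((i : ({s} : Finset ℕ)) → ℝ) =>
        g ⟨s, Finset.mem_singleton_self s⟩) ∘ (fun ω (i : ({s} : Finset ℕ)) => Y i ω))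
        = Y s from rfl] at this
    rwa [show (φ ∘ fun ω (i : T) => Y i ω) = ((F (s + 1))ᶜ).indicator (M (s + 1))
      from heq] at this
  -- main downward induction
  have key : ∀ k s, s + k = u →
      a * (P (F s)).toReal + ∫ ω in (F s)ᶜ, M s ω ∂P ≤ 1 := by
    intro k
    induction k with
    | zero =>
      intro s hs
      have hsu : s = u := by omega
      subst hsu
      have hFu : F s = ∅ := by
        ext ω
        simp only [hF, Set.mem_setOf_eq, Set.mem_empty_iff_false, iff_false, not_exists]
        rintro s' ⟨h1, h2, h3⟩
        have hs' : s' = s := le_antisymm h2 h1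
        subst hs'
        simp only [hM, Finset.Ico_self, Finset.prod_empty] at h3
        linarith
      have hMs : M s = fun _ => (1 : ℝ) := by
        funext ω; simp [hM, Finset.Ico_self]
      rw [hFu, hMs]
      simp
    | succ k ih =>
      intro s hs
      have hsu : s < u := by omega
      have ih' := ih (s + 1) (by omega)
      set T : Set Ω := (F (s + 1))ᶜ ∩ {ω | a < M s ω} with hTs
      have hTmeas : MeasurableSet T :=
        (hFmeas (s + 1)).compl.inter (measurableSet_lt measurable_const (hMmeas s))
      have hFdecomp : F s = T ∪ F (s + 1) := by
        ext ω
        simp only [hTs, Set.mem_union, Set.mem_inter_iff, Set.mem_compl_iff, hF,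
          Set.mem_setOf_eq]
        constructor
        · rintro ⟨s', h1, h2, h3⟩
          by_cases hω : ∃ s'', s + 1 ≤ s'' ∧ s'' ≤ u ∧ a < M s'' ω
          · exact Or.inr hω
          · left
            refine ⟨hω, ?_⟩
            have : s' = s := by
              by_contra hne
              exact hω ⟨s', by omega, h2, h3⟩
            subst this
            exact h3
        · rintro (⟨_, h2⟩ | ⟨s', h1, h2, h3⟩)
          · exact ⟨s, le_rfl, hsu.le, h2⟩
          · exact ⟨s', by omega, h2, h3⟩
      have hdisj : Disjoint T (F (s + 1)) :=
        Set.disjoint_left.mpr fun ω hω h2 => hω.1 h2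
      have hsplit : (F (s + 1))ᶜ = T ∪ (F s)ᶜ := by
        ext ω
        simp only [Set.mem_compl_iff, Set.mem_union, hTs, Set.mem_inter_iff,
          Set.mem_compl_iff, Set.mem_setOf_eq, hFdecomp]
        tauto
      have hdisj2 : Disjoint T (F s)ᶜ := by
        refine Set.disjoint_left.mpr fun ω hω hc => hc ?_
        rw [hFdecomp]
        exact Or.inl hω
      -- measure splits
      have hPsplit : (P (F s)).toReal = (P T).toReal + (P (F (s + 1))).toReal := by
        rw [hFdecomp, measure_union hdisj (hFmeas (s + 1)),
          ENNReal.toReal_add (measure_ne_top P _) (measure_ne_top P _)]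
      -- integral splits
      have hIsplit : ∫ ω in (F (s + 1))ᶜ, M s ω ∂P
          = (∫ ω in T, M s ω ∂P) + ∫ ω in (F s)ᶜ, M s ω ∂P := by
        rw [hsplit, setIntegral_union hdisj2 (hFmeas s).compl
          (hMint s).integrableOn (hMint s).integrableOn]
      have hTlow : a * (P T).toReal ≤ ∫ ω in T, M s ω ∂P :=
        setIntegral_ge_of_const_le_real hTmeas (measure_ne_top P T)
          (fun ω hω => (hω.2 : a < M s ω).le) (hMint s).integrableOn
      -- the supermartingale / independence step
      have hkey : ∫ ω in (F (s + 1))ᶜ, M s ω ∂P ≤ ∫ ω in (F (s + 1))ᶜ, M (s + 1) ω ∂P := by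
        set g : Ω → ℝ := ((F (s + 1))ᶜ).indicator (M (s + 1)) with hg
        have hgmeas : Measurable g := (hMmeas (s + 1)).indicator (hFmeas (s + 1)).compl
        have hgnn : ∀ ω, 0 ≤ g ω := fun ω =>
          Set.indicator_nonneg (fun ω' _ => hMnn (s + 1) ω') ω
        have hMsplit : ∀ ω, M s ω = Y s ω * M (s + 1) ω := by
          intro ω
          rw [hM]
          exact Finset.prod_eq_prod_Ico_succ_bot hsu _
        have h1 : ∫ ω in (F (s + 1))ᶜ, M s ω ∂P = ∫ ω, Y s ω * g ω ∂P := by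
          rw [← integral_indicator (hFmeas (s + 1)).compl]
          congr 1
          funext ω
          by_cases hω : ω ∈ (F (s + 1))ᶜ
          · rw [Set.indicator_of_mem hω, hg, Set.indicator_of_mem hω, hMsplit ω]
          · rw [Set.indicator_of_notMem hω, hg, Set.indicator_of_notMem hω, mul_zero]
        have h2 : ∫ ω, Y s ω * g ω ∂P = (∫ ω, Y s ω ∂P) * ∫ ω, g ω ∂P :=
          (hindkey s).integral_fun_mul_eq_mul_integral
            (hYmeas s).aestronglyMeasurable hgmeas.aestronglyMeasurable
        have h3 : (∫ ω, Y s ω ∂P) * (∫ ω, g ω ∂P) ≤ ∫ ω, g ω ∂P :=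
          mul_le_of_le_one_left (integral_nonneg hgnn) (hY1 s)
        have h4 : ∫ ω, g ω ∂P = ∫ ω in (F (s + 1))ᶜ, M (s + 1) ω ∂P :=
          integral_indicator (hFmeas (s + 1)).compl
        rw [h1, h2, ← h4]
        exact h3
      have hPT : (0 : ℝ) ≤ (P T).toReal := ENNReal.toReal_nonneg
      calc a * (P (F s)).toReal + ∫ ω in (F s)ᶜ, M s ω ∂P
          = a * (P T).toReal + a * (P (F (s + 1))).toReal + ∫ ω in (F s)ᶜ, M s ω ∂P := by
            rw [hPsplit]; ring
        _ ≤ (∫ ω in T, M s ω ∂P) + a * (P (F (s + 1))).toReal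
            + ∫ ω in (F s)ᶜ, M s ω ∂P := by linarith
        _ = a * (P (F (s + 1))).toReal + ∫ ω in (F (s + 1))ᶜ, M s ω ∂P := by
            rw [hIsplit]; ring
        _ ≤ a * (P (F (s + 1))).toReal + ∫ ω in (F (s + 1))ᶜ, M (s + 1) ω ∂P := by
            linarith
        _ ≤ 1 := ih'
  -- conclude
  have ha0 : (0 : ℝ) < a := lt_of_lt_of_le one_pos ha
  have h0 := key u 0 (by omega)
  have hint0 : (0 : ℝ) ≤ ∫ ω in (F 0)ᶜ, M 0 ω ∂P :=
    setIntegral_nonneg (hFmeas 0).compl fun ω _ => hMnn 0 ω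
  have h1 : (P (F 0)).toReal ≤ 1 / a := by
    rw [le_div_iff₀ ha0]
    nlinarith
  have hset : {ω | ∃ s, s ≤ u ∧ a < ∏ i ∈ Finset.Ico s u, Y i ω} = F 0 := by
    ext ω
    simp only [hF, Set.mem_setOf_eq, hM]
    exact ⟨fun ⟨s, h1, h2⟩ => ⟨s, Nat.zero_le s, h1, h2⟩, fun ⟨s, _, h1, h2⟩ => ⟨s, h1, h2⟩⟩
  calc P {ω | ∃ s, s ≤ u ∧ a < ∏ i ∈ Finset.Ico s u, Y i ω}
      = ENNReal.ofReal (P (F 0)).toReal := by rw [hset, ENNReal.ofReal_toReal (measure_ne_top P _)]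
    _ ≤ ENNReal.ofReal (1 / a) := ENNReal.ofReal_le_ofReal h1

/-- Transient delay bound for a discrete-time Poisson arrival process with
rate `λ` served at constant rate `C`: if `λ(e^θ-1)/θ ≤ C` for some `θ > 0`,
then `P(D(t) > D̄) ≤ e^{-θCD̄}`, where the event `{D(t) > D̄}` (for the virtual
delay `D(t) = inf{d : A(t-d) ≤ R(t)}`) is `{ω | ∀ d ≤ D̄, R t ω < A (t-d) ω}`. -/
theorem poisson_transient_delay_bound
    {Ω : Type*} {m : MeasurableSpace Ω} (P : Measure Ω) [IsProbabilityMeasure P]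
    (A : ℕ → Ω → ℝ) (R : ℕ → Ω → ℝ) (lam C θ : ℝ)
    (hlam : 0 < lam) (hC : 0 < C) (hθ : 0 < θ)
    (hstab : lam * (Real.exp θ - 1) / θ ≤ C)
    (hA0 : ∀ ω, A 0 ω = 0)
    (hAmono : ∀ ω, Monotone fun s => A s ω)
    (hAmeas : ∀ s, Measurable (A s))
    (hRmeas : ∀ t, Measurable (R t))
    -- increments over unit slots are independent
    (hindep : iIndepFun
      (fun i ω => A (i + 1) ω - A i ω) P)
    -- each increment over an interval of length u has the Poisson(λu) MGF
    (hMGF : ∀ s u : ℕ, ∀ θ' : ℝ,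
      ∫ ω, Real.exp (θ' * (A (s + u) ω - A s ω)) ∂P
        = Real.exp (lam * u * (Real.exp θ' - 1)))
    -- the server guarantees the service process `S(s,t) = C(t-s)`
    (hservice : ∀ t : ℕ, ∀ ω, (⨅ s : Fin (t + 1), (A s ω + C * ((t : ℝ) - (s : ℕ)))) ≤ R t ω) :
    ∀ t D : ℕ,
      P {ω | ∀ d : ℕ, d ≤ D → R t ω < A (t - d) ω}
        ≤ ENNReal.ofReal (Real.exp (-(θ * C * D))) := by
  intro t D
  set u : ℕ := t - D with hu
  set Y : ℕ → Ω → ℝ := fun i ω => Real.exp (θ * (A (i + 1) ω - A i ω - C)) with hY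
  have hYmeas : ∀ i, Measurable (Y i) := by
    intro i
    exact (((hAmeas (i + 1)).sub (hAmeas i)).sub measurable_const).const_mul θ |>.exp
  have hYnn : ∀ i ω, 0 ≤ Y i ω := fun i ω => (Real.exp_pos _).le
  have hexpint : ∀ i, Integrable (fun ω => Real.exp (θ * (A (i + 1) ω - A i ω))) P := by
    intro i
    by_contra h
    have hm := hMGF i 1 θ
    rw [integral_undef h] at hm
    exact Real.exp_ne_zero _ hm.symm
  have hYeq : ∀ i, Y i = fun ω =>
      Real.exp (θ * (A (i + 1) ω - A i ω)) * Real.exp (-(θ * C)) := by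
    intro i
    funext ω
    simp only [hY]
    rw [← Real.exp_add]
    congr 1
    ring
  have hYint : ∀ i, Integrable (Y i) P := by
    intro i
    rw [hYeq i]
    exact (hexpint i).mul_const _
  have hY1 : ∀ i, ∫ ω, Y i ω ∂P ≤ 1 := by
    intro i
    rw [hYeq i, integral_mul_const, hMGF i 1 θ, ← Real.exp_add, Real.exp_le_one_iff]
    have hst : lam * (Real.exp θ - 1) ≤ C * θ := (div_le_iff₀ hθ).mp hstab
    push_cast
    nlinarith
  have hYind : iIndepFun Y P := by
    have := hindep.comp (fun _ (x : ℝ) => Real.exp (θ * (x - C)))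
      (fun _ => ((measurable_id.sub_const C).const_mul θ).exp)
    exact this
  have hville := ville_ineq P Y hYmeas hYnn hYint hY1 hYind u
    (Real.exp (θ * C * D)) (Real.one_le_exp (by positivity))
  -- telescoping sum
  have htel : ∀ (ω : Ω) (s : ℕ), s ≤ u →
      ∏ i ∈ Finset.Ico s u, Y i ω
        = Real.exp (θ * (A u ω - A s ω - C * ((u : ℝ) - s))) := by
    intro ω s hsu
    rw [hY]
    rw [← Real.exp_sum]
    congr 1
    rw [← Finset.mul_sum]
    congr 1
    have h1 : ∑ i ∈ Finset.Ico s u, (A (i + 1) ω - A i ω - C)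
        = (∑ i ∈ Finset.Ico s u, (A (i + 1) ω - A i ω)) - (Finset.Ico s u).card * C := by
      rw [Finset.sum_sub_distrib, Finset.sum_const, nsmul_eq_mul]
    rw [h1, sum_Ico_telescope (fun n => A n ω) hsu, Nat.card_Ico, Nat.cast_sub hsu]
    ring
  -- event inclusion
  have hsub : {ω | ∀ d : ℕ, d ≤ D → R t ω < A (t - d) ω}
      ⊆ {ω | ∃ s, s ≤ u ∧ Real.exp (θ * C * D) < ∏ i ∈ Finset.Ico s u, Y i ω} := by
    intro ω hω
    have h1 : R t ω < A u ω := hω D le_rfl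
    obtain ⟨s₀, hs₀⟩ := Finite.exists_min (fun s : Fin (t + 1) =>
      A s ω + C * ((t : ℝ) - (s : ℕ)))
    have h2 : A (s₀ : ℕ) ω + C * ((t : ℝ) - (s₀ : ℕ)) ≤ R t ω :=
      le_trans (le_ciInf hs₀) (hservice t ω)
    set s : ℕ := (s₀ : ℕ) with hsdef
    have hst : s ≤ t := Nat.lt_succ_iff.mp s₀.isLt
    have hstR : (s : ℝ) ≤ (t : ℝ) := Nat.cast_le.mpr hst
    have hsu : s < u := by
      by_contra hcon
      push_neg at hcon
      have hmono : A u ω ≤ A s ω := hAmono ω hcon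
      have hC0 : 0 ≤ C * ((t : ℝ) - s) := mul_nonneg hC.le (by linarith)
      linarith
    have hDt : D ≤ t := by omega
    have hcastu : ((u : ℕ) : ℝ) = (t : ℝ) - D := by
      rw [hu, Nat.cast_sub hDt]
    have h3 : C * ((u : ℝ) - s) + C * D < A u ω - A s ω := by
      have : C * ((t : ℝ) - s) = C * ((u : ℝ) - s) + C * D := by
        rw [hcastu]; ring
      linarith
    refine ⟨s, hsu.le, ?_⟩
    rw [htel ω s hsu.le, Real.exp_lt_exp, mul_assoc]
    apply mul_lt_mul_of_pos_left _ hθ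
    linarith
  calc P {ω | ∀ d : ℕ, d ≤ D → R t ω < A (t - d) ω}
      ≤ P {ω | ∃ s, s ≤ u ∧ Real.exp (θ * C * D) < ∏ i ∈ Finset.Ico s u, Y i ω} :=
        measure_mono hsub
    _ ≤ ENNReal.ofReal (1 / Real.exp (θ * C * D)) := hville
    _ = ENNReal.ofReal (Real.exp (-(θ * C * D))) := by
        rw [one_div, ← Real.exp_neg]
end
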